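/- Let k ≥ 4 and s > t ≥ 1 be fixed integers, let 0 ≤ m ≤ s − t, and let n be sufficiently large. Write q = ⌊n/(k−1)⌋, r = n − (k−1)q, and Δ_m = (2(k−1)(k−2)(s−t−m) + (k−2)(k−1−r)r)^{1/2} / ((k−1)(k−2)). Then the minimum of ∏_{i=2}^{k−1} x_i over all tuples (x₁, …, x_{k−1}) of nonnegative real numbers satisfying Σ_{i=1}^{k−1} x_i = n and Σ_{i=1}^{k−1} x_i² = n² − 2t_{k−1}(n) + 2(s − t − m) equals (n/(k−1) − Δ_m)^{k−2}, and it is attained at the point with x₁ = n/(k−1) + (k−2)Δ_m and x₂ = ⋯ = x_{k−1} = n/(k−1) − Δ_m. -/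

import Mathlib

open Finset SimpleGraph

/-- Number of `k`-cliques of a graph. -/
noncomputable def cliqueCount {V : Type*} (G : SimpleGraph V) (k : ℕ) : ℕ :=
  Nat.card {T : Finset V // G.IsNClique k T}

/-- `K_k`-covering number: minimum size of a vertex set meeting every `k`-clique. -/
noncomputable def cliqueCover {V : Type*} [Fintype V] [DecidableEq V]
    (G : SimpleGraph V) (k : ℕ) : ℕ :=
  sInf {m | ∃ S : Finset V, S.card = m ∧ ∀ T : Finset V, G.IsNClique k T → ∃ v ∈ T, v ∈ S}

/-- Number of edges of a graph. -/
noncomputable def edgeCount {V : Type*} (G : SimpleGraph V) : ℕ := Nat.card G.edgeSet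

/-- Number of edges of the Turán graph `T_r(n)`. -/
noncomputable def turanEdges (r n : ℕ) : ℕ := edgeCount (turanGraph n r)

/-- `e(n) = n² - 4⌊n²/4⌋`. -/
def eDef (n : ℕ) : ℕ := n ^ 2 - 4 * (n ^ 2 / 4)

/-- `m_{s,t}(n)`: least `m` such that `4s - 4t - 4m + e(n)` is a perfect square. -/
noncomputable def mst (s t n : ℕ) : ℕ :=
  sInf {m : ℕ | ∃ p : ℕ, (p : ℤ) ^ 2 = 4 * s - 4 * t - 4 * m + eDef n}

/-- `R₃(n,s,t) = (4s - 4t - 4m_{s,t}(n) + e(n))^{1/2}`. -/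
noncomputable def R3 (s t n : ℕ) : ℕ :=
  Nat.sqrt (4 * (s : ℤ) - 4 * t - 4 * mst s t n + eDef n).toNat

/-- Number of copies of `F` in `G`: subgraphs of `G` isomorphic to `F`. -/
noncomputable def copyCount {α V : Type*} (F : SimpleGraph α) (G : SimpleGraph V) : ℕ :=
  Nat.card {H : G.Subgraph // Nonempty (F ≃g H.coe)}

/-- `F`-covering number of `G`. -/
noncomputable def coverNumber {α V : Type*} [Fintype V] [DecidableEq V]
    (F : SimpleGraph α) (G : SimpleGraph V) : ℕ :=
  sInf {m | ∃ S : Finset V, S.card = m ∧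
    ∀ H : G.Subgraph, Nonempty (F ≃g H.coe) → ∃ v ∈ H.verts, v ∈ S}

/-- A graph `F` is `k`-critical. -/
def IsCritical {α : Type*} (k : ℕ) (F : SimpleGraph α) : Prop :=
  F.chromaticNumber = k ∧ ∃ e ∈ F.edgeSet, (F.deleteEdges {e}).chromaticNumber < k

/-- `c(n,F)`: minimum number of copies of `F` after adding one new edge to `T_{k-1}(n)`. -/
noncomputable def cnF {α : Type*} (k n : ℕ) (F : SimpleGraph α) : ℕ :=
  sInf {c | ∃ u v : Fin n, u ≠ v ∧ ¬ (turanGraph n (k - 1)).Adj u v ∧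
    c = copyCount F (turanGraph n (k - 1) ⊔ fromEdgeSet {s(u, v)})}

/-- `N_k(n,s)` from Theorem 1.3. -/
def NkBound (k s n : ℕ) : ℕ :=
  if n % (k - 1) = 0 then s * (n / (k - 1)) ^ (k - 3) * (n / (k - 1) - 1)
  else if n % (k - 1) = 1 then s * (n / (k - 1)) ^ (k - 2) - (n / (k - 1)) ^ (k - 3)
  else s * (n / (k - 1) + 1) ^ (n % (k - 1) - 2) * (n / (k - 1)) ^ (k - n % (k - 1))

/-- `R_k(n,s,t)`. -/
noncomputable def Rk (k s t n : ℕ) : ℝ :=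
  Real.sqrt ((2 * ((k : ℝ) - 1) * ((s : ℝ) - t) +
    ((k : ℝ) - 1 - (n % (k - 1) : ℕ)) * (n % (k - 1) : ℕ)) / ((k : ℝ) - 2))

/-- `c(x₁,…,x_{k-1},F)`: copies of `F` in the complete multipartite graph with parts
`Fin (x i)` plus one edge inside part `0`. -/
noncomputable def cParts {α : Type*} (k : ℕ) (x : Fin (k - 1) → ℕ) (F : SimpleGraph α) : ℕ :=
  sInf {c | ∃ i₀ : Fin (k - 1), ∃ a b : Fin (x i₀), (i₀ : ℕ) = 0 ∧ a ≠ b ∧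
    c = copyCount F (completeMultipartiteGraph (fun i => Fin (x i)) ⊔
      fromEdgeSet {s(⟨i₀, a⟩, ⟨i₀, b⟩)})}


set_option maxHeartbeats 4000000

lemma aux_count_mod (K : ℕ) (hK : 0 < K) (j : ℕ) (hj : j < K) :
    ∀ n : ℕ, ((Finset.range n).filter (fun v => v % K = j)).card
      = n / K + if j < n % K then 1 else 0 := by
  intro n
  induction n with
  | zero => simp
  | succ n ih =>
    rw [Finset.range_add_one, Finset.filter_insert]
    have hmod : (n + 1) % K = (n % K + 1) % K := by
      conv_lhs => rw [← Nat.div_add_mod n K]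
      rw [Nat.add_assoc, Nat.mul_add_mod]
    have hdiv : (n + 1) / K = n / K + (n % K + 1) / K := by
      conv_lhs => rw [← Nat.div_add_mod n K]
      rw [Nat.add_assoc, Nat.mul_add_div hK]
    have hlt : n % K < K := Nat.mod_lt n hK
    by_cases hc : n % K = j
    · rw [if_pos hc, Finset.card_insert_of_notMem (by simp), ih]
      rcases Nat.lt_or_ge (n % K + 1) K with h2 | h2
      · rw [Nat.mod_eq_of_lt h2] at hmod
        rw [Nat.div_eq_of_lt h2] at hdiv
        rw [hmod, hdiv]
        split_ifs <;> omega
      · have h3 : n % K + 1 = K := by omega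
        rw [h3, Nat.mod_self] at hmod
        rw [h3, Nat.div_self hK] at hdiv
        rw [hmod, hdiv]
        split_ifs <;> omega
    · rw [if_neg hc, ih]
      rcases Nat.lt_or_ge (n % K + 1) K with h2 | h2
      · rw [Nat.mod_eq_of_lt h2] at hmod
        rw [Nat.div_eq_of_lt h2] at hdiv
        rw [hmod, hdiv]
        split_ifs <;> omega
      · have h3 : n % K + 1 = K := by omega
        rw [h3, Nat.mod_self] at hmod
        rw [h3, Nat.div_self hK] at hdiv
        rw [hmod, hdiv]
        split_ifs <;> omega

lemma aux_log_quad {L e x : ℝ} (hL : 0 < L) (hLe : L ≤ e) (hx : L ≤ x) :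
    Real.log e + (x - e) / e - (x - e) ^ 2 / (2 * L ^ 2) ≤ Real.log x := by
  have he : 0 < e := lt_of_lt_of_le hL hLe
  set h : ℝ → ℝ := fun y => Real.log y - (y - e) / e + (y - e) ^ 2 / (2 * L ^ 2) with hh
  have hd : ∀ y : ℝ, 0 < y →
      HasDerivAt h ((y - e) * (e * y - L ^ 2) / (e * y * L ^ 2)) y := by
    intro y hy
    have h1 : HasDerivAt Real.log y⁻¹ y := Real.hasDerivAt_log hy.ne'
    have h2 : HasDerivAt (fun y : ℝ => (y - e) / e) (1 / e) y := by
      simpa using ((hasDerivAt_id y).sub_const e).div_const e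
    have h3 : HasDerivAt (fun y : ℝ => (y - e) ^ 2 / (2 * L ^ 2))
        ((2 * (y - e) ^ 1 * 1) / (2 * L ^ 2)) y := by
      exact (((hasDerivAt_id y).sub_const e).pow 2).div_const (2 * L ^ 2)
    have := (h1.sub h2).add h3
    refine this.congr_deriv ?_
    field_simp
    ring
  have key : h e ≤ h x := by
    rcases le_total x e with hxe | hex
    · have mono : AntitoneOn h (Set.Icc L e) := by
        apply antitoneOn_of_deriv_nonpos (convex_Icc L e)
        · intro y hy
          exact (hd y (lt_of_lt_of_le hL hy.1)).differentiableAt.continuousAt.continuousWithinAt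
        · intro y hy
          rw [interior_Icc] at hy
          exact (hd y (lt_of_lt_of_le hL hy.1.le)).differentiableAt.differentiableWithinAt
        · intro y hy
          rw [interior_Icc] at hy
          have hy0 : 0 < y := lt_of_lt_of_le hL hy.1.le
          rw [(hd y hy0).deriv]
          apply div_nonpos_of_nonpos_of_nonneg
          · apply mul_nonpos_of_nonpos_of_nonneg
            · linarith [hy.2]
            · nlinarith [hy.1, hy.2, hL, hLe]
          · positivity
      exact mono ⟨hx, hxe⟩ ⟨hLe, le_refl e⟩ hxe
    · have mono : MonotoneOn h (Set.Ici e) := by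
        apply monotoneOn_of_deriv_nonneg (convex_Ici e)
        · intro y hy
          exact (hd y (lt_of_lt_of_le he hy)).differentiableAt.continuousAt.continuousWithinAt
        · intro y hy
          rw [interior_Ici] at hy
          exact (hd y (lt_of_lt_of_le he hy.le)).differentiableAt.differentiableWithinAt
        · intro y hy
          rw [interior_Ici] at hy
          have hy0 : 0 < y := lt_of_lt_of_le he hy.le
          rw [(hd y hy0).deriv]
          apply div_nonneg
          · have h1 : L ^ 2 ≤ e * y := by nlinarith [(show e < y from hy).le, hLe, hL, he]
            have h2 : (0:ℝ) ≤ y - e := by linarith [(show e < y from hy).le]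
            nlinarith
          · positivity
      exact mono (le_refl e) hex hex
  have heq : h e = Real.log e := by simp [hh]
  rw [heq] at key
  have : h x = Real.log x - (x - e) / e + (x - e) ^ 2 / (2 * L ^ 2) := rfl
  rw [this] at key
  linarith

lemma aux_fin_filter_card (n K : ℕ) (p : ℕ → Prop) [DecidablePred p] :
    ((Finset.univ : Finset (Fin n)).filter (fun v : Fin n => p v.val)).card
      = ((Finset.range n).filter p).card := by
  rw [Finset.card_filter, Finset.card_filter]
  exact Fin.sum_univ_eq_sum_range (fun i => if p i then 1 else 0) n

lemma aux_turan_edges (K n : ℕ) (hK : 0 < K) :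
    2 * edgeCount (turanGraph n K) + (n * (n / K) + n % K * (n / K) + n % K) = n * n := by
  classical
  have hE : edgeCount (turanGraph n K) = (turanGraph n K).edgeFinset.card := by
    simp [edgeCount, Nat.card_eq_fintype_card, SimpleGraph.edgeFinset, Set.toFinset_card]
  rw [hE, ← SimpleGraph.sum_degrees_eq_twice_card_edges]
  -- degree formula
  have hdeg : ∀ v : Fin n, (turanGraph n K).degree v
      + (n / K + if (v : ℕ) % K < n % K then 1 else 0) = n := by
    intro v
    have h1 : (turanGraph n K).degree v
        = ((Finset.univ : Finset (Fin n)).filter (fun w => (turanGraph n K).Adj v w)).card := by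
      rw [← SimpleGraph.neighborFinset_eq_filter]; rfl
    have h2 : ((Finset.univ : Finset (Fin n)).filter (fun w => ¬ (turanGraph n K).Adj v w)).card
        = n / K + if (v : ℕ) % K < n % K then 1 else 0 := by
      have hadj : ∀ w : Fin n, (¬ (turanGraph n K).Adj v w) ↔ ((w : ℕ) % K = (v : ℕ) % K) := by
        intro w
        simp only [turanGraph, not_not]
        constructor <;> (intro h; omega)
      have : ((Finset.univ : Finset (Fin n)).filter (fun w => ¬ (turanGraph n K).Adj v w))
          = ((Finset.univ : Finset (Fin n)).filter (fun w : Fin n => w.val % K = (v : ℕ) % K)) := by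
        apply Finset.filter_congr; intro w _; simp [hadj w]
      rw [this, aux_fin_filter_card n K (fun w => w % K = (v : ℕ) % K),
        aux_count_mod K hK ((v : ℕ) % K) (Nat.mod_lt _ hK)]
    have h3 := Finset.card_filter_add_card_filter_not
      (s := (Finset.univ : Finset (Fin n))) (p := fun w => (turanGraph n K).Adj v w)
    rw [Finset.card_univ, Fintype.card_fin] at h3
    omega
  have hsum : ∑ v : Fin n, ((turanGraph n K).degree v
      + (n / K + if (v : ℕ) % K < n % K then 1 else 0)) = n * n := by
    rw [Finset.sum_congr rfl (fun v _ => hdeg v)]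
    simp [Finset.card_univ, mul_comm]
  rw [Finset.sum_add_distrib, Finset.sum_add_distrib] at hsum
  have hconst : ∑ _v : Fin n, (n / K) = n * (n / K) := by
    simp [Finset.card_univ, mul_comm]
  have hite : ∑ v : Fin n, (if (v : ℕ) % K < n % K then 1 else 0)
      = n % K * (n / K) + n % K := by
    have h4 : ∑ v : Fin n, (if (v : ℕ) % K < n % K then 1 else 0)
        = ((Finset.univ : Finset (Fin n)).filter (fun v : Fin n => v.val % K < n % K)).card := by
      rw [Finset.card_filter]
    rw [h4, aux_fin_filter_card n K (fun v => v % K < n % K)]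
    have h5 : ((Finset.range n).filter (fun v => v % K < n % K)).card
        = ∑ j ∈ Finset.range (n % K), (((Finset.range n).filter (fun v => v % K < n % K)).filter
            (fun v => v % K = j)).card := by
      apply Finset.card_eq_sum_card_fiberwise
      intro v hv
      simp only [Finset.coe_filter, Set.mem_setOf_eq] at hv
      simp [hv.2]
    rw [h5]
    have h6 : ∀ j ∈ Finset.range (n % K),
        (((Finset.range n).filter (fun v => v % K < n % K)).filter (fun v => v % K = j))
        = ((Finset.range n).filter (fun v => v % K = j)) := by
      intro j hj
      rw [Finset.filter_filter]
      apply Finset.filter_congr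
      intro v _
      simp only [Finset.mem_range] at hj
      constructor
      · intro h; exact h.2
      · intro h; exact ⟨by omega, h⟩
    have h7 : ∀ j ∈ Finset.range (n % K),
        (((Finset.range n).filter (fun v => v % K < n % K)).filter
            (fun v => v % K = j)).card = n / K + 1 := by
      intro j hj
      rw [h6 j hj]
      simp only [Finset.mem_range] at hj
      have hmlt : n % K < K := Nat.mod_lt _ hK
      rw [aux_count_mod K hK j (by omega : j < K)]
      simp [hj]
    rw [Finset.sum_congr rfl h7, Finset.sum_const, Finset.card_range, smul_eq_mul]
    ring
  rw [hconst, hite] at hsum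
  omega

lemma aux_opt (K : ℕ) (hK : 3 ≤ K) (a Δ : ℝ) (hΔ0 : 0 ≤ Δ)
    (hLb1 : 1 ≤ a - ((K : ℝ) - 1) * Δ) (hΔa : (3 * (K : ℝ) - 2) * Δ ≤ a)
    (x : Fin K → ℝ)
    (hxsum : ∑ i, x i = (K : ℝ) * a)
    (hxsq : ∑ i, x i ^ 2 = (K : ℝ) * a ^ 2 + (K : ℝ) * ((K : ℝ) - 1) * Δ ^ 2) :
    (a - Δ) ^ (K - 1) ≤ ∏ i ∈ Finset.univ.filter (fun i : Fin K => (i : ℕ) ≠ 0), x i := by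
  haveI : NeZero K := ⟨by omega⟩
  set Kr : ℝ := (K : ℝ) with hKr
  have hKr3 : (3 : ℝ) ≤ Kr := by rw [hKr]; exact_mod_cast hK
  set Lb : ℝ := a - (Kr - 1) * Δ with hLbdef
  set e : ℝ := a - Δ with hedef
  set Rb : ℝ := a + (Kr - 1) * Δ with hRbdef
  have hLb0 : (0 : ℝ) < Lb := by linarith
  have hLbe : Lb ≤ e := by rw [hLbdef, hedef]; nlinarith
  have he0 : (0 : ℝ) < e := lt_of_lt_of_le hLb0 hLbe
  have ha0 : (0 : ℝ) ≤ a := by nlinarith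
  have hendpoint : 0 ≤ Lb ^ 2 + e ^ 2 - e * Rb := by
    rw [hLbdef, hedef, hRbdef]; nlinarith
  -- filter facts
  have hfilter : (Finset.univ.filter (fun i : Fin K => (i : ℕ) ≠ 0))
      = Finset.univ.erase (0 : Fin K) := by
    ext i; simp only [Finset.mem_filter, Finset.mem_univ, true_and, Finset.mem_erase, and_true, ne_eq, Fin.ext_iff, Fin.val_zero]
  have hcard_erase : (Finset.univ.erase (0 : Fin K)).card = K - 1 := by
    rw [Finset.card_erase_of_mem (Finset.mem_univ _), Finset.card_univ, Fintype.card_fin]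
  have hcastKm1 : ((K - 1 : ℕ) : ℝ) = Kr - 1 := by
    rw [hKr]; push_cast [Nat.cast_sub (by omega : 1 ≤ K)]; ring
  -- deviation bounds
  have hsum_d : ∑ i, (x i - a) = 0 := by
    rw [Finset.sum_sub_distrib, Finset.sum_const, Finset.card_univ, Fintype.card_fin,
      nsmul_eq_mul, hxsum, hKr]; ring
  have hsum_d2 : ∑ i, (x i - a) ^ 2 = Kr * (Kr - 1) * Δ ^ 2 := by
    have hexp : ∑ i, (x i - a) ^ 2
        = (∑ i, x i ^ 2) - 2 * a * (∑ i, x i) + (K : ℝ) * a ^ 2 := by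
      rw [Finset.sum_congr rfl (fun i _ => by ring :
        ∀ i ∈ Finset.univ, (x i - a) ^ 2 = x i ^ 2 - 2 * a * x i + a ^ 2)]
      rw [Finset.sum_add_distrib, Finset.sum_sub_distrib, Finset.mul_sum, Finset.sum_const,
        Finset.card_univ, Fintype.card_fin, nsmul_eq_mul]
      try ring
    rw [hexp, hxsum, hxsq, ← hKr]; ring
  have hdbound : ∀ j : Fin K, (x j - a) ^ 2 ≤ ((Kr - 1) * Δ) ^ 2 := by
    intro j
    have hcs := sq_sum_le_card_mul_sum_sq (s := Finset.univ.erase j)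
      (f := fun i => x i - a)
    have hc : ((Finset.univ.erase j).card : ℝ) = Kr - 1 := by
      rw [Finset.card_erase_of_mem (Finset.mem_univ _), Finset.card_univ, Fintype.card_fin,
        hcastKm1]
    have h1 : ∑ i ∈ Finset.univ.erase j, (x i - a) = -(x j - a) := by
      have h := Finset.add_sum_erase _ (fun i => x i - a) (Finset.mem_univ j)
      rw [hsum_d] at h
      linarith
    have h2 : ∑ i ∈ Finset.univ.erase j, (x i - a) ^ 2
        = Kr * (Kr - 1) * Δ ^ 2 - (x j - a) ^ 2 := by
      have h := Finset.add_sum_erase _ (fun i => (x i - a) ^ 2) (Finset.mem_univ j)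
      rw [hsum_d2] at h
      linarith
    rw [h1, h2, hc] at hcs
    have hKrpos : (0:ℝ) < Kr := by linarith
    rw [neg_pow] at hcs
    nlinarith [hcs]
  have hxLb : ∀ j : Fin K, Lb ≤ x j ∧ x j ≤ Rb := by
    intro j
    have hB : (0:ℝ) ≤ (Kr - 1) * Δ := by nlinarith
    have := abs_le_of_sq_le_sq' (hdbound j) hB
    constructor
    · rw [hLbdef]; linarith [this.1]
    · rw [hRbdef]; linarith [this.2]
  have hxpos : ∀ j : Fin K, 0 < x j := fun j => lt_of_lt_of_le hLb0 (hxLb j).1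
  -- log inequality summed over S
  set S : Finset (Fin K) := Finset.univ.erase (0 : Fin K) with hSdef
  have hcardS : (S.card : ℝ) = Kr - 1 := by rw [hSdef, hcard_erase, hcastKm1]
  have hlog : ∀ i ∈ S, Real.log e + (x i - e) / e - (x i - e) ^ 2 / (2 * Lb ^ 2)
      ≤ Real.log (x i) := fun i _ => aux_log_quad hLb0 hLbe (hxLb i).1
  have hsumlog : (Kr - 1) * Real.log e
      + ((∑ i ∈ S, x i) - (Kr - 1) * e) / e
      - (∑ i ∈ S, (x i - e) ^ 2) / (2 * Lb ^ 2)
      ≤ ∑ i ∈ S, Real.log (x i) := by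
    have := Finset.sum_le_sum hlog
    rw [Finset.sum_sub_distrib, Finset.sum_add_distrib, Finset.sum_const, nsmul_eq_mul,
      hcardS] at this
    rw [← Finset.sum_div, ← Finset.sum_div, Finset.sum_sub_distrib, Finset.sum_const,
      nsmul_eq_mul, hcardS] at this
    linarith [this]
  -- identify sums over S
  have hS_sum : ∑ i ∈ S, x i = Kr * a - x 0 := by
    have h := Finset.add_sum_erase _ x (Finset.mem_univ (0 : Fin K))
    rw [hxsum] at h
    rw [hSdef]; linarith
  have hS_sumsq : ∑ i ∈ S, x i ^ 2 = Kr * a ^ 2 + Kr * (Kr - 1) * Δ ^ 2 - x 0 ^ 2 := by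
    have h := Finset.add_sum_erase _ (fun i => x i ^ 2) (Finset.mem_univ (0 : Fin K))
    rw [hxsq] at h
    rw [hSdef]; linarith
  have hS_sq_e : ∑ i ∈ S, (x i - e) ^ 2
      = (∑ i ∈ S, x i ^ 2) - 2 * e * (∑ i ∈ S, x i) + (Kr - 1) * e ^ 2 := by
    rw [Finset.sum_congr rfl (fun i _ => by ring :
      ∀ i ∈ S, (x i - e) ^ 2 = x i ^ 2 - 2 * e * x i + e ^ 2)]
    rw [Finset.sum_add_distrib, Finset.sum_sub_distrib, Finset.mul_sum, Finset.sum_const,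
      nsmul_eq_mul, hcardS]
  -- the key quadratic inequality
  have hx0R : x 0 ≤ Rb := (hxLb 0).2
  have hx00 : 0 < x 0 := hxpos 0
  have hnum : 2 * Lb ^ 2 * ((Kr * a - x 0) - (Kr - 1) * e)
      - e * ((Kr * a ^ 2 + Kr * (Kr - 1) * Δ ^ 2 - x 0 ^ 2)
          - 2 * e * (Kr * a - x 0) + (Kr - 1) * e ^ 2)
      = (Rb - x 0) * (2 * Lb ^ 2 - e * (x 0 + Rb - 2 * e)) := by
    rw [hLbdef, hedef, hRbdef]; ring
  have hfac : 0 ≤ (Rb - x 0) * (2 * Lb ^ 2 - e * (x 0 + Rb - 2 * e)) := by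
    apply mul_nonneg
    · linarith [hx0R]
    · have : e * x 0 ≤ e * Rb := by nlinarith [hx0R, he0, hx00]
      nlinarith [hendpoint]
  have hkey : (∑ i ∈ S, (x i - e) ^ 2) / (2 * Lb ^ 2)
      ≤ ((∑ i ∈ S, x i) - (Kr - 1) * e) / e := by
    rw [hS_sq_e, hS_sum, hS_sumsq]
    rw [div_le_div_iff₀ (by positivity) he0]
    nlinarith [hnum, hfac]
  have hfinal : (Kr - 1) * Real.log e ≤ ∑ i ∈ S, Real.log (x i) := by linarith
  -- convert to product
  have hprod_pos : 0 < ∏ i ∈ S, x i := Finset.prod_pos (fun i _ => hxpos i)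
  have hlogprod : Real.log (∏ i ∈ S, x i) = ∑ i ∈ S, Real.log (x i) :=
    Real.log_prod (fun i _ => (hxpos i).ne')
  have hgoal : e ^ (K - 1) ≤ ∏ i ∈ S, x i := by
    rw [← Real.log_le_log_iff (by positivity) hprod_pos, Real.log_pow, hlogprod, hcastKm1]
    linarith
  rw [hfilter]
  exact hgoal

lemma aux_xstar (K : ℕ) (hK : 3 ≤ K) (a Δ : ℝ) (x : Fin K → ℝ)
    (hx : x = fun i : Fin K => if (i : ℕ) = 0 then a + ((K : ℝ) - 1) * Δ else a - Δ) :
    (∑ i, x i = (K : ℝ) * a) ∧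
    (∑ i, x i ^ 2 = (K : ℝ) * a ^ 2 + (K : ℝ) * ((K : ℝ) - 1) * Δ ^ 2) ∧
    ((∏ i ∈ Finset.univ.filter (fun i : Fin K => (i : ℕ) ≠ 0), x i) = (a - Δ) ^ (K - 1)) := by
  haveI : NeZero K := ⟨by omega⟩
  have hcast : ((K - 1 : ℕ) : ℝ) = (K : ℝ) - 1 := by
    push_cast [Nat.cast_sub (by omega : 1 ≤ K)]; ring
  have hfilter : (Finset.univ.filter (fun i : Fin K => (i : ℕ) ≠ 0))
      = Finset.univ.erase (0 : Fin K) := by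
    ext i; simp only [Finset.mem_filter, Finset.mem_univ, true_and, Finset.mem_erase, and_true, ne_eq, Fin.ext_iff, Fin.val_zero]
  have hcard_erase : (Finset.univ.erase (0 : Fin K)).card = K - 1 := by
    rw [Finset.card_erase_of_mem (Finset.mem_univ _), Finset.card_univ, Fintype.card_fin]
  have hx0 : x 0 = a + ((K : ℝ) - 1) * Δ := by rw [hx]; simp
  have hxe : ∀ i ∈ Finset.univ.erase (0 : Fin K), x i = a - Δ := by
    intro i hi
    rw [hx]
    simp only [Finset.mem_erase] at hi
    simp only []
    rw [if_neg (by simpa only [ne_eq, Fin.ext_iff, Fin.val_zero] using hi.1)]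
  refine ⟨?_, ?_, ?_⟩
  · rw [← Finset.add_sum_erase _ x (Finset.mem_univ (0 : Fin K)), hx0,
      Finset.sum_congr rfl hxe, Finset.sum_const, hcard_erase, nsmul_eq_mul, hcast]
    ring
  · rw [← Finset.add_sum_erase _ (fun i => x i ^ 2) (Finset.mem_univ (0 : Fin K)), hx0, Finset.sum_congr rfl (fun i hi => by rw [hxe i hi]), Finset.sum_const,
      hcard_erase, nsmul_eq_mul, hcast]
    ring
  · rw [hfilter, Finset.prod_congr rfl hxe, Finset.prod_const, hcard_erase]


/-- solution of the optimization problem `OPT_m-C`: the minimum of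
`∏_{i=2}^{k-1} x_i` over nonnegative reals with `Σ x_i = n` and
`Σ x_i² = n² - 2t_{k-1}(n) + 2(s - t - m)` is `(n/(k-1) - Δ_m)^{k-2}`, attained at
`x₁ = n/(k-1) + (k-2)Δ_m`, `x₂ = ⋯ = x_{k-1} = n/(k-1) - Δ_m`. -/
theorem stmt_17 (k s t m : ℕ) (hk : 4 ≤ k) (ht : 1 ≤ t) (hts : t < s) (hm : m ≤ s - t) :
    ∃ n₀ : ℕ, ∀ n ≥ n₀, ∀ Δ : ℝ,
      Δ = Real.sqrt (2 * ((k : ℝ) - 1) * ((k : ℝ) - 2) * ((s : ℝ) - t - m) +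
            ((k : ℝ) - 2) * ((k : ℝ) - 1 - (n % (k - 1) : ℕ)) * (n % (k - 1) : ℕ)) /
          (((k : ℝ) - 1) * ((k : ℝ) - 2)) →
      ∀ xstar : Fin (k - 1) → ℝ,
        xstar = (fun i : Fin (k - 1) => if (i : ℕ) = 0 then
            (n : ℝ) / ((k : ℝ) - 1) + ((k : ℝ) - 2) * Δ
          else (n : ℝ) / ((k : ℝ) - 1) - Δ) →
      IsLeast {y : ℝ | ∃ x : Fin (k - 1) → ℝ, (∀ i, 0 ≤ x i) ∧ (∑ i, x i) = n ∧
            (∑ i, x i ^ 2) =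
              (n : ℝ) ^ 2 - 2 * turanEdges (k - 1) n + 2 * ((s : ℝ) - t - m) ∧
            y = ∏ i ∈ Finset.univ.filter (fun i : Fin (k - 1) => (i : ℕ) ≠ 0), x i}
          (((n : ℝ) / ((k : ℝ) - 1) - Δ) ^ (k - 2)) ∧
        (∀ i, 0 ≤ xstar i) ∧ (∑ i, xstar i) = n ∧
        (∑ i, xstar i ^ 2) =
          (n : ℝ) ^ 2 - 2 * turanEdges (k - 1) n + 2 * ((s : ℝ) - t - m) ∧
        (∏ i ∈ Finset.univ.filter (fun i : Fin (k - 1) => (i : ℕ) ≠ 0), xstar i) =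
          ((n : ℝ) / ((k : ℝ) - 1) - Δ) ^ (k - 2) := by
  refine ⟨(k + 2 * s + 2) ^ 4, ?_⟩
  intro n hn Δ hΔ xstar hxstar
  have hk11 : ((k : ℝ) - 1) = ((k - 1 : ℕ) : ℝ) := by
    push_cast [Nat.cast_sub (by omega : 1 ≤ k)]; ring
  have hk21 : ((k : ℝ) - 2) = ((k - 1 : ℕ) : ℝ) - 1 := by
    push_cast [Nat.cast_sub (by omega : 1 ≤ k)]; ring
  rw [hk11, hk21] at hΔ hxstar
  rw [hk11]
  set KR : ℝ := ((k - 1 : ℕ) : ℝ) with hKRdef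
  set a : ℝ := (n : ℝ) / KR with hadef
  have hK3 : 3 ≤ k - 1 := by omega
  have hKR3 : (3 : ℝ) ≤ KR := by rw [hKRdef]; exact_mod_cast hK3
  have hKR0 : KR ≠ 0 := by linarith
  have hKR1 : KR - 1 ≠ 0 := by linarith
  have han : KR * a = n := by rw [hadef]; field_simp
  -- σ facts
  have hσ0 : (0 : ℝ) ≤ (s : ℝ) - t - m := by
    have h1 : m + t ≤ s := by omega
    have h2 : (m : ℝ) + t ≤ s := by exact_mod_cast h1
    linarith
  have hσs : (s : ℝ) - t - m ≤ (s : ℝ) := by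
    have h1 : (1 : ℝ) ≤ t := by exact_mod_cast ht
    have h2 : (0 : ℝ) ≤ m := Nat.cast_nonneg m
    linarith
  -- residue facts
  have hrlt : n % (k - 1) < k - 1 := Nat.mod_lt _ (by omega)
  have hrK : ((n % (k - 1) : ℕ) : ℝ) ≤ KR - 1 := by
    rw [hKRdef]
    have : (n % (k - 1)) + 1 ≤ k - 1 := hrlt
    have h2 := (Nat.cast_le (α := ℝ)).mpr this
    push_cast at h2; linarith
  have hr0 : (0 : ℝ) ≤ ((n % (k - 1) : ℕ) : ℝ) := Nat.cast_nonneg _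
  -- Δ facts
  have hinner0 : (0 : ℝ) ≤ 2 * KR * (KR - 1) * ((s : ℝ) - t - m)
      + (KR - 1) * (KR - ((n % (k - 1) : ℕ) : ℝ)) * ((n % (k - 1) : ℕ) : ℝ) := by
    have t1 : (0:ℝ) ≤ 2 * KR * (KR - 1) * ((s : ℝ) - t - m) :=
      mul_nonneg (mul_nonneg (mul_nonneg (by norm_num) (by linarith)) (by linarith)) hσ0
    have t2 : (0:ℝ) ≤ (KR - 1) * (KR - ((n % (k - 1) : ℕ) : ℝ)) * ((n % (k - 1) : ℕ) : ℝ) :=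
      mul_nonneg (mul_nonneg (by linarith) (by linarith)) hr0
    linarith
  have hΔ0 : 0 ≤ Δ := by
    rw [hΔ]
    exact div_nonneg (Real.sqrt_nonneg _) (by nlinarith)
  have hΔsq : (KR * (KR - 1)) ^ 2 * Δ ^ 2
      = 2 * KR * (KR - 1) * ((s : ℝ) - t - m)
      + (KR - 1) * (KR - ((n % (k - 1) : ℕ) : ℝ)) * ((n % (k - 1) : ℕ) : ℝ) := by
    rw [hΔ, div_pow, Real.sq_sqrt hinner0]
    field_simp
  have hV : KR ^ 2 * (KR - 1) * Δ ^ 2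
      = 2 * KR * ((s : ℝ) - t - m)
      + (KR - ((n % (k - 1) : ℕ) : ℝ)) * ((n % (k - 1) : ℕ) : ℝ) := by
    apply mul_left_cancel₀ hKR1
    linear_combination hΔsq
  -- edge identity
  have hedge := aux_turan_edges (k - 1) n (by omega)
  have hEr : 2 * (turanEdges (k - 1) n : ℝ)
      + ((n : ℝ) * ((n / (k - 1) : ℕ) : ℝ) + ((n % (k - 1) : ℕ) : ℝ) * ((n / (k - 1) : ℕ) : ℝ)
        + ((n % (k - 1) : ℕ) : ℝ)) = (n : ℝ) * n := by
    exact_mod_cast hedge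
  have hnqr : (n : ℝ) = KR * ((n / (k - 1) : ℕ) : ℝ) + ((n % (k - 1) : ℕ) : ℝ) := by
    rw [hKRdef]
    exact_mod_cast (Nat.div_add_mod n (k - 1)).symm
  have hS2 : (n : ℝ) ^ 2 - 2 * (turanEdges (k - 1) n : ℝ) + 2 * ((s : ℝ) - t - m)
      = KR * a ^ 2 + KR * (KR - 1) * Δ ^ 2 := by
    apply mul_left_cancel₀ hKR0
    linear_combination (-KR) * hEr - hV - (KR * a + (n : ℝ)) * han
      - ((n : ℝ) + ((n % (k - 1) : ℕ) : ℝ)) * hnqr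
  -- size bounds
  have hk0 : (4 : ℝ) ≤ (k : ℝ) := by exact_mod_cast hk
  have hs0 : (0 : ℝ) ≤ (s : ℝ) := Nat.cast_nonneg s
  have hKRk : KR ≤ (k : ℝ) := by rw [hKRdef]; exact_mod_cast Nat.sub_le k 1
  have h6 : (6:ℝ) ≤ KR * (KR - 1) := by
    nlinarith [mul_nonneg (show (0:ℝ) ≤ KR - 3 by linarith) (show (0:ℝ) ≤ KR + 2 by linarith)]
  have hP0 : (0:ℝ) < KR * (KR - 1) := by linarith
  have hP : (0:ℝ) < (KR * (KR - 1)) ^ 2 := pow_pos hP0 2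
  have hΔle : Δ ≤ (k : ℝ) + 2 * s := by
    have i1 : 2 * KR * (KR - 1) * ((s : ℝ) - t - m) ≤ (KR * (KR - 1)) ^ 2 * (2 * s) := by
      nlinarith [mul_nonneg (le_of_lt hP0) (sub_nonneg.2 hσs),
        mul_nonneg (mul_nonneg (le_of_lt hP0) (show (0:ℝ) ≤ KR * (KR - 1) - 1 by linarith)) hs0]
    have h1 : (KR - ((n % (k - 1) : ℕ) : ℝ)) * ((n % (k - 1) : ℕ) : ℝ) ≤ KR * KR :=
      mul_le_mul (by linarith) (by linarith) hr0 (by linarith)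
    have i2 : (KR - 1) * (KR - ((n % (k - 1) : ℕ) : ℝ)) * ((n % (k - 1) : ℕ) : ℝ)
        ≤ (KR * (KR - 1)) ^ 2 * (k : ℝ) := by
      have h2 : (KR - 1) * ((KR - ((n % (k - 1) : ℕ) : ℝ)) * ((n % (k - 1) : ℕ) : ℝ))
          ≤ (KR - 1) * (KR * KR) := mul_le_mul_of_nonneg_left h1 (by linarith)
      have h3 : (KR - 1) * (KR * KR) ≤ (KR * (KR - 1)) ^ 2 * (k : ℝ) := by
        nlinarith [mul_nonneg (mul_nonneg (mul_nonneg (show (0:ℝ) ≤ KR by linarith)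
          (show (0:ℝ) ≤ KR by linarith)) (show (0:ℝ) ≤ KR - 1 by linarith))
          (show (0:ℝ) ≤ (KR - 1) * (k:ℝ) - 1 by nlinarith)]
      linarith [h2, h3, (by ring : (KR - 1) * (KR - ((n % (k - 1) : ℕ) : ℝ))
        * ((n % (k - 1) : ℕ) : ℝ) = (KR - 1) * ((KR - ((n % (k - 1) : ℕ) : ℝ))
        * ((n % (k - 1) : ℕ) : ℝ)))]
    have hΔ2 : Δ ^ 2 ≤ (k : ℝ) + 2 * s := by
      have h : (KR * (KR - 1)) ^ 2 * Δ ^ 2 ≤ (KR * (KR - 1)) ^ 2 * ((k : ℝ) + 2 * s) := by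
        rw [hΔsq]; nlinarith [i1, i2]
      exact le_of_mul_le_mul_left h hP
    nlinarith [hΔ2, hΔ0, hk0, hs0]
  have ha_big : 3 * KR * ((k : ℝ) + 2 * s) + 1 ≤ a := by
    have hna : ((k + 2 * s + 2 : ℕ) ^ 4 : ℝ) ≤ (n : ℝ) := by exact_mod_cast hn
    have h2 : ((k : ℝ) * (3 * k * (k + 2 * s) + 1)) ≤ ((k + 2 * s + 2 : ℕ) ^ 4 : ℝ) := by
      push_cast
      set u : ℝ := (k : ℝ) + 2 * s with hu_def
      have hu4 : (4:ℝ) ≤ u := by rw [hu_def]; linarith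
      have hu0 : (0:ℝ) ≤ u := by linarith
      have hku : (k:ℝ) ≤ u := by rw [hu_def]; linarith
      have c1 : (k:ℝ) * (3 * k * u + 1) ≤ u * (3 * u * u + 1) := by
        apply mul_le_mul hku _ (by positivity) hu0
        have : (k:ℝ) * u ≤ u * u := mul_le_mul_of_nonneg_right hku hu0
        nlinarith [this]
      have c2 : u * (3 * u * u + 1) ≤ 4 * u ^ 3 := by
        nlinarith [mul_nonneg (mul_nonneg hu0 (show (0:ℝ) ≤ u - 1 by linarith))
          (show (0:ℝ) ≤ u + 1 by linarith)]
      have c3 : 4 * u ^ 3 ≤ u ^ 4 := by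
        nlinarith [mul_nonneg (mul_nonneg (mul_nonneg hu0 hu0) hu0)
          (show (0:ℝ) ≤ u - 4 by linarith)]
      have c4 : u ^ 4 ≤ (u + 2) ^ 4 :=
        pow_le_pow_left₀ hu0 (by linarith) 4
      calc (k:ℝ) * (3 * k * u + 1) ≤ u * (3 * u * u + 1) := c1
        _ ≤ 4 * u ^ 3 := c2
        _ ≤ u ^ 4 := c3
        _ ≤ (u + 2) ^ 4 := c4
    have h3 : KR * (3 * KR * ((k : ℝ) + 2 * s) + 1) ≤ (k : ℝ) * (3 * k * (k + 2 * s) + 1) := by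
      nlinarith [mul_nonneg (mul_nonneg (sub_nonneg.2 hKRk)
        (show (0:ℝ) ≤ (k:ℝ) + KR by linarith)) (show (0:ℝ) ≤ (k:ℝ) + 2 * s by positivity)]
    have h4 : KR * (3 * KR * ((k : ℝ) + 2 * s) + 1) ≤ KR * a := by
      rw [han]; linarith
    exact le_of_mul_le_mul_left h4 (by linarith)
  have hCb0 : (0:ℝ) ≤ (k : ℝ) + 2 * s := by positivity
  have hLb1 : 1 ≤ a - (KR - 1) * Δ := by nlinarith
  have hΔa : (3 * KR - 2) * Δ ≤ a := by nlinarith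
  -- xstar facts
  obtain ⟨hxsum, hxsq, hxprod⟩ := aux_xstar (k - 1) hK3 a Δ xstar (by rw [hxstar, ← hKRdef])
  rw [← hKRdef] at hxsum hxsq
  have hexp : k - 1 - 1 = k - 2 := by omega
  rw [hexp] at hxprod
  have hxnn : ∀ i, 0 ≤ xstar i := by
    intro i
    simp only [hxstar]
    split_ifs
    · nlinarith
    · nlinarith
  have hsum_n : (∑ i, xstar i) = (n : ℝ) := by rw [hxsum, han]
  have hsq_n : (∑ i, xstar i ^ 2)
      = (n : ℝ) ^ 2 - 2 * (turanEdges (k - 1) n : ℝ) + 2 * ((s : ℝ) - t - m) := by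
    rw [hxsq, hS2]
  -- lower bound
  have hlower : ∀ y ∈ {y : ℝ | ∃ x : Fin (k - 1) → ℝ, (∀ i, 0 ≤ x i) ∧ (∑ i, x i) = (n : ℝ) ∧
        (∑ i, x i ^ 2) =
          (n : ℝ) ^ 2 - 2 * (turanEdges (k - 1) n : ℝ) + 2 * ((s : ℝ) - t - m) ∧
        y = ∏ i ∈ Finset.univ.filter (fun i : Fin (k - 1) => (i : ℕ) ≠ 0), x i},
      (a - Δ) ^ (k - 2) ≤ y := by
    rintro y ⟨x, hxnn', hxsum', hxsq', hy⟩
    have h1 : ∑ i, x i = ((k - 1 : ℕ) : ℝ) * a := by rw [hxsum', ← han, hKRdef]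
    have h2 : ∑ i, x i ^ 2
        = ((k - 1 : ℕ) : ℝ) * a ^ 2 + ((k - 1 : ℕ) : ℝ) * (((k - 1 : ℕ) : ℝ) - 1) * Δ ^ 2 := by
      rw [hxsq', hS2, hKRdef]
    have h3 := aux_opt (k - 1) hK3 a Δ hΔ0 (by rw [← hKRdef] at *; exact hLb1)
      (by rw [← hKRdef] at *; exact hΔa) x h1 h2
    rw [hexp] at h3
    rw [hy]
    exact h3
  exact ⟨⟨⟨xstar, hxnn, hsum_n, hsq_n, hxprod.symm⟩, hlower⟩, hxnn, hsum_n, hsq_n, hxprod⟩
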